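/- Let σ be a permutation of {1,…,m} with disjoint cycle decomposition (i(1,1),…,i(1,e₁))⋯(i(n,1),…,i(n,eₙ)), let V be a finite-dimensional vector space, and A₁,…,Aₘ ∈ End(V). Let H : V^⊗m → V^⊗m be the map sending v₁ ⊗ ⋯ ⊗ vₘ to the tensor whose σ(i)-th factor is A_i(v_i). Then tr(H) = Π_{t=1}^n tr(A_{i(t,e_t)} ⋯ A_{i(t,1)}). -/

import Mathlib

open scoped TensorProduct

section aux
variable {F : Type} [Field F] {ι : Type} [Fintype ι] [DecidableEq ι]

private lemma cyc_entry_lemma : ∀ (s : ℕ) (B : Fin (s+1) → Matrix ι ι F) (p q : ι),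
    ((List.ofFn B).reverse.prod) p q
      = ∑ c : Fin (s+1) → ι, (if c (Fin.last s) = p
          then ∏ ℓ : Fin (s+1), B ℓ (c ℓ)
            (if _ : ℓ.val = 0 then q else c ⟨ℓ.val - 1, by omega⟩)
          else 0) := by
  intro s
  induction s with
  | zero =>
    intro B p q
    rw [← (Equiv.funUnique (Fin 1) ι).symm.sum_comp]
    simp [Fin.last]
  | succ s IH =>
    intro B p q
    rw [List.ofFn_succ', List.concat_eq_append, List.reverse_append]
    rw [List.reverse_singleton, List.singleton_append, List.prod_cons, Matrix.mul_apply]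
    rw [← (Fin.snocEquiv (fun _ => ι)).sum_comp, Fintype.sum_prod_type]
    have rhs_eq : ∀ x : ι, ∀ c' : Fin (s+1) → ι,
        (if (Fin.snocEquiv (fun _ => ι) (x, c')) (Fin.last (s+1)) = p
          then ∏ ℓ : Fin (s+2), B ℓ ((Fin.snocEquiv (fun _ => ι) (x, c')) ℓ)
            (if _ : ℓ.val = 0 then q
             else (Fin.snocEquiv (fun _ => ι) (x, c')) ⟨ℓ.val - 1, by omega⟩)
          else 0)
        = (if x = p
            then (∏ j : Fin (s+1), B j.castSucc (c' j)
              (if _ : j.val = 0 then q else c' ⟨j.val - 1, by omega⟩))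
              * B (Fin.last (s+1)) x (c' (Fin.last s))
            else 0) := by
      intro x c'
      simp only [Fin.snocEquiv_apply, Fin.snoc_last]
      have hmk : ∀ (v : ℕ) (h : v < s+1) (h2 : v < s+2),
          Fin.snoc (α := fun _ => ι) c' x (⟨v, h2⟩ : Fin (s+2)) = c' ⟨v, h⟩ := by
        intro v h h2
        have e : (⟨v, h2⟩ : Fin (s+2)) = Fin.castSucc ⟨v, h⟩ := rfl
        rw [e, Fin.snoc_castSucc]
      by_cases hx : x = p
      · subst hx
        rw [if_pos rfl, if_pos rfl, Fin.prod_univ_castSucc]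
        congr 1
        · refine Finset.prod_congr rfl (fun j _ => ?_)
          simp only [Fin.coe_castSucc, Fin.snoc_castSucc]
          by_cases h0 : (j : ℕ) = 0
          · rw [dif_pos h0, dif_pos h0]
          · rw [dif_neg h0, dif_neg h0, hmk _ (by omega)]
        · rw [dif_neg (by simp [Fin.last])]
          congr 1
          · exact Fin.snoc_last _ _
          · exact hmk (↑(Fin.last (s+1))-1) (by simp [Fin.val_last]) _
      · rw [if_neg hx, if_neg hx]
    simp only [rhs_eq]
    rw [Finset.sum_comm]
    simp only [Finset.sum_ite_eq', Finset.mem_univ, if_true]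
    simp only [IH, Finset.mul_sum, mul_ite, mul_zero]
    rw [Finset.sum_comm]
    refine Finset.sum_congr rfl (fun c' _ => ?_)
    rw [Finset.sum_ite_eq, if_pos (Finset.mem_univ _), mul_comm]

private lemma fin_rotate_eq (s : ℕ) (ℓ : Fin (s+1)) :
    finRotate (s+1) ℓ = ⟨(ℓ.val + 1) % (s+1), Nat.mod_lt _ (Nat.succ_pos s)⟩ := by
  rw [finRotate_succ_apply]
  ext
  simp [Fin.add_def, Nat.add_mod, Nat.mod_mod_of_dvd]

private lemma cyc_trace (s : ℕ) (hs : 0 < s) (B : Fin s → Matrix ι ι F) :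
    Matrix.trace ((List.ofFn B).reverse.prod)
      = ∑ c : Fin s → ι, ∏ ℓ : Fin s,
          B ℓ (c ⟨(ℓ.val + 1) % s, Nat.mod_lt _ hs⟩) (c ℓ) := by
  obtain ⟨s, rfl⟩ : ∃ s', s = s' + 1 := ⟨s - 1, by omega⟩
  rw [Matrix.trace]
  simp only [Matrix.diag_apply, cyc_entry_lemma]
  rw [Finset.sum_comm]
  simp only [Finset.sum_ite_eq, Finset.mem_univ, if_true]
  set ρ := finRotate (s+1) with hρ
  refine Fintype.sum_equiv (Equiv.arrowCongr ρ (Equiv.refl ι)) _ _ (fun c => ?_)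
  refine Finset.prod_congr rfl (fun ℓ _ => ?_)
  have hval : ∀ x : Fin (s+1), (Equiv.arrowCongr ρ (Equiv.refl ι)) c x = c (ρ.symm x) := by
    intro x; simp [Equiv.arrowCongr]
  rw [hval, hval]
  congr 1
  · congr 1
    rw [Equiv.eq_symm_apply, hρ, fin_rotate_eq]
  · by_cases h0 : (ℓ : ℕ) = 0
    · rw [dif_pos h0]
      congr 1
      rw [Equiv.eq_symm_apply, hρ, fin_rotate_eq]
      ext
      simp [Fin.last, h0, Nat.mod_self]
    · rw [dif_neg h0]
      congr 1
      rw [Equiv.eq_symm_apply, hρ, fin_rotate_eq]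
      ext
      show ((ℓ : ℕ) - 1 + 1) % (s+1) = ℓ
      rw [show (ℓ : ℕ) - 1 + 1 = ℓ from by omega, Nat.mod_eq_of_lt ℓ.isLt]

end aux

section basis
variable (F : Type) [Field F] (V : Type) [AddCommGroup V] [Module F V] [FiniteDimensional F V]
variable (m : ℕ)

private noncomputable def bV : Module.Basis (Fin (Module.finrank F V)) F V := Module.finBasis F V

private noncomputable def phiAux (k : Fin m → Fin (Module.finrank F V)) :
    (⨂[F] _ : Fin m, V) →ₗ[F] F :=
  PiTensorProduct.lift ((MultilinearMap.mkPiAlgebra F (Fin m) F).compLinearMap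
    (fun i => (bV F V).coord (k i)))

private noncomputable def Tvec (k : Fin m → Fin (Module.finrank F V)) : ⨂[F] _ : Fin m, V :=
  PiTensorProduct.tprod F (fun i => bV F V (k i))

private lemma phiAux_tprod (k : Fin m → Fin (Module.finrank F V)) (w : Fin m → V) :
    phiAux F V m k (PiTensorProduct.tprod F w) = ∏ i, (bV F V).coord (k i) (w i) := by
  simp [phiAux]

private lemma phiAux_T (k k' : Fin m → Fin (Module.finrank F V)) :
    phiAux F V m k (Tvec F V m k') = if k' = k then 1 else 0 := by
  rw [Tvec, phiAux_tprod]
  by_cases h : k' = k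
  · subst h; simp
  · rw [if_neg h]
    obtain ⟨i, hi⟩ := Function.ne_iff.mp h
    refine Finset.prod_eq_zero (Finset.mem_univ i) ?_
    simp [Module.Basis.coord_apply, Module.Basis.repr_self, Finsupp.single_apply]; exact hi

private lemma T_li : LinearIndependent F (Tvec F V m) := by
  rw [linearIndependent_iff']
  intro s gcoef hsum j hj
  have := congrArg (phiAux F V m j) hsum
  rw [map_sum, map_zero] at this
  simp only [map_smul, phiAux_T, smul_eq_mul] at this
  rwa [Finset.sum_eq_single j (fun i _ hij => by simp [hij])
    (fun h => absurd hj h), if_pos rfl, mul_one] at this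

private lemma T_span : ⊤ ≤ Submodule.span F (Set.range (Tvec F V m)) := by
  rw [← PiTensorProduct.span_tprod_eq_top, Submodule.span_le]
  rintro - ⟨w, rfl⟩
  have hw : (PiTensorProduct.tprod F) w
      = PiTensorProduct.tprod F (fun i => ∑ p, ((bV F V).repr (w i)) p • bV F V p) := by
    congr 1; funext i; exact ((bV F V).sum_repr (w i)).symm
  rw [hw, MultilinearMap.map_sum (PiTensorProduct.tprod F)
    (fun i p => (bV F V).repr (w i) p • bV F V p)]
  refine Submodule.sum_mem _ (fun r _ => ?_)
  rw [MultilinearMap.map_smul_univ]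
  exact Submodule.smul_mem _ _ (Submodule.subset_span ⟨r, rfl⟩)

private noncomputable def Bbig :
    Module.Basis (Fin m → Fin (Module.finrank F V)) F (⨂[F] _ : Fin m, V) :=
  Module.Basis.mk (T_li F V m) (T_span F V m)

private lemma Bbig_coord (k : Fin m → Fin (Module.finrank F V)) :
    (Bbig F V m).coord k = phiAux F V m k := by
  refine Module.Basis.ext (Bbig F V m) (fun k' => ?_)
  calc (Bbig F V m).coord k ((Bbig F V m) k') = if k' = k then 1 else 0 := by
        simp [Module.Basis.coord_apply, Finsupp.single_apply]
    _ = phiAux F V m k ((Bbig F V m) k') := by rw [Bbig, Module.Basis.mk_apply, phiAux_T]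

private lemma traceH (A : Fin m → Module.End F V) (σ : Equiv.Perm (Fin m)) :
    LinearMap.trace F (⨂[F] _ : Fin m, V)
        ((PiTensorProduct.reindex F (fun _ : Fin m => V) σ).toLinearMap ∘ₗ
          PiTensorProduct.map A)
      = ∑ k : Fin m → Fin (Module.finrank F V),
          ∏ i, LinearMap.toMatrix (bV F V) (bV F V) (A i) (k (σ i)) (k i) := by
  rw [LinearMap.trace_eq_matrix_trace F (Bbig F V m), Matrix.trace]
  refine Finset.sum_congr rfl (fun k _ => ?_)
  rw [Matrix.diag_apply, LinearMap.toMatrix_apply,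
    show (Bbig F V m) k = Tvec F V m k from Module.Basis.mk_apply _ _ _,
    show ((Bbig F V m).repr _) k = (Bbig F V m).coord k _ from rfl, Bbig_coord, Tvec]
  simp only [LinearMap.coe_comp, Function.comp_apply, LinearEquiv.coe_coe,
    PiTensorProduct.map_tprod, PiTensorProduct.reindex_tprod]
  rw [phiAux_tprod, ← Equiv.prod_comp σ]
  refine Finset.prod_congr rfl (fun i _ => ?_)
  rw [LinearMap.toMatrix_apply, Module.Basis.coord_apply, Equiv.symm_apply_apply]

end basis


/-- If `σ` is a permutation of `{1,…,m}` with disjoint cycle decomposition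
`(i(1,1),…,i(1,e₁)) ⋯ (i(n,1),…,i(n,eₙ))` (encoded by a bijection
`g : (Σ t, Fin (e t)) ≃ Fin m` with `σ (g ⟨t,ℓ⟩) = g ⟨t,ℓ+1⟩` cyclically), then the trace of
the endomorphism of `V^⊗m` sending `v₁ ⊗ ⋯ ⊗ vₘ` to the tensor whose `σ(i)`-th factor is
`Aᵢ(vᵢ)` equals `Π_t tr(A_{i(t,e_t)} ⋯ A_{i(t,1)})`. -/
theorem trace_perm_tensor_endomorphism
    (F : Type) [Field F] (V : Type) [AddCommGroup V] [Module F V] [FiniteDimensional F V]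
    (m n : ℕ) (A : Fin m → Module.End F V)
    (σ : Equiv.Perm (Fin m)) (e : Fin n → ℕ) (he : ∀ t, 0 < e t)
    (g : (Σ t : Fin n, Fin (e t)) ≃ Fin m)
    (hσ : ∀ (t : Fin n) (ℓ : Fin (e t)),
      σ (g ⟨t, ℓ⟩) = g ⟨t, ⟨(ℓ.val + 1) % e t, Nat.mod_lt _ (he t)⟩⟩) :
    LinearMap.trace F (⨂[F] _ : Fin m, V)
        ((PiTensorProduct.reindex F (fun _ : Fin m => V) σ).toLinearMap ∘ₗ
          PiTensorProduct.map A) =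
      ∏ t : Fin n,
        LinearMap.trace F V
          ((List.ofFn fun ℓ : Fin (e t) => A (g ⟨t, ℓ⟩)).reverse.prod) := by
  classical
  set ι := Fin (Module.finrank F V)
  set M : Fin m → Matrix ι ι F := fun i => LinearMap.toMatrix (bV F V) (bV F V) (A i) with hM
  -- RHS
  have rhs : ∀ t : Fin n,
      LinearMap.trace F V ((List.ofFn fun ℓ : Fin (e t) => A (g ⟨t, ℓ⟩)).reverse.prod)
        = ∑ c : Fin (e t) → ι, ∏ ℓ : Fin (e t),
            M (g ⟨t, ℓ⟩) (c ⟨(ℓ.val + 1) % e t, Nat.mod_lt _ (he t)⟩) (c ℓ) := by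
    intro t
    rw [LinearMap.trace_eq_matrix_trace F (bV F V)]
    rw [show LinearMap.toMatrix (bV F V) (bV F V)
          ((List.ofFn fun ℓ : Fin (e t) => A (g ⟨t, ℓ⟩)).reverse.prod)
        = ((List.ofFn fun ℓ : Fin (e t) => A (g ⟨t, ℓ⟩)).reverse.map
            (LinearMap.toMatrixAlgEquiv (bV F V))).prod from
      map_list_prod (LinearMap.toMatrixAlgEquiv (bV F V)).toAlgHom _]
    rw [List.map_reverse, List.map_ofFn]
    refine Eq.trans (cyc_trace (e t) (he t) _) ?_
    refine Finset.sum_congr rfl (fun c _ => Finset.prod_congr rfl (fun ℓ _ => ?_))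
    simp only [Function.comp_apply, hM, LinearMap.toMatrixAlgEquiv_apply,
      LinearMap.toMatrix_apply]
  simp only [rhs]
  -- LHS
  rw [traceH]
  have lhs_eq : ∀ k : Fin m → ι,
      (∏ i, M i (k (σ i)) (k i))
        = ∏ t : Fin n, ∏ ℓ : Fin (e t),
            M (g ⟨t, ℓ⟩) (k (g ⟨t, ⟨(ℓ.val + 1) % e t, Nat.mod_lt _ (he t)⟩⟩)) (k (g ⟨t, ℓ⟩)) := by
    intro k
    rw [← Equiv.prod_comp g (fun i => M i (k (σ i)) (k i)),
      ← Finset.univ_sigma_univ, Finset.prod_sigma]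
    refine Finset.prod_congr rfl (fun t _ => Finset.prod_congr rfl (fun ℓ _ => ?_))
    rw [hσ t ℓ]
  simp only [show ∀ k : Fin m → ι, (∏ i, LinearMap.toMatrix (bV F V) (bV F V) (A i) (k (σ i)) (k i)) = _ from lhs_eq]
  -- reindex the sum over k
  set E : (∀ t : Fin n, Fin (e t) → ι) ≃ (Fin m → ι) :=
    (Equiv.piCurry (α := Fin n) (β := fun t => Fin (e t)) (fun _ _ => ι)).symm.trans
      (Equiv.arrowCongr g (Equiv.refl ι)) with hE
  rw [← E.sum_comp, Fintype.prod_sum]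
  refine Finset.sum_congr rfl (fun K _ => ?_)
  refine Finset.prod_congr rfl (fun t _ => Finset.prod_congr rfl (fun ℓ _ => ?_))
  have hEapp : ∀ s : Σ t : Fin n, Fin (e t), E K (g s) = K s.1 s.2 := by
    intro s
    simp only [hE, Equiv.trans_apply, Equiv.arrowCongr_apply, Equiv.coe_refl,
      Function.comp_apply, Equiv.symm_apply_apply, Equiv.piCurry_symm_apply,
      Sigma.uncurry, Function.comp, id_eq]
    rw [Equiv.symm_apply_apply]
  rw [hEapp ⟨t, ℓ⟩, hEapp ⟨t, _⟩]
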